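/- For non-negative integers k, l, m with l ≥ k, one has (1/(π·m!)) ∫_ℂ w̄^k · w^l · K_m(z,w) · |w|^{2m} · e^{-|w|²} dA(w) = ((l+m)!/(l-k+m)!) · z^{l-k}, where K_m(z,w) = Σ_{n≥0} (m!/(n+m)!)(z·w̄)^n. -/

import Mathlib

open MeasureTheory Complex

/-- The reproducing kernel of the Fock-Sobolev space `F^{2,m}(ℂ)`. -/
noncomputable def fockKernel (m : ℕ) (z w : ℂ) : ℂ :=
  ∑' n : ℕ, ((Nat.factorial m : ℂ) / (Nat.factorial (n + m))) * (z * (starRingEnd ℂ) w) ^ n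

open Set in

lemma key_integral (a b : ℕ) :
    ∫ w : ℂ, ((starRingEnd ℂ) w) ^ a * w ^ b * (Real.exp (-(‖w‖) ^ 2) : ℂ) =
      if a = b then (Real.pi : ℂ) * a.factorial else 0 := by
  rw [← Complex.integral_comp_polarCoord_symm]
  rw [show polarCoord.target = Ioi (0:ℝ) ×ˢ Ioo (-Real.pi) Real.pi from rfl]
  have hcongr : ∀ p ∈ Ioi (0:ℝ) ×ˢ Ioo (-Real.pi) Real.pi,
      p.1 • (((starRingEnd ℂ) (Complex.polarCoord.symm p)) ^ a * (Complex.polarCoord.symm p) ^ b *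
        (Real.exp (-(‖Complex.polarCoord.symm p‖) ^ 2) : ℂ)) =
      ((p.1 : ℂ) ^ (a+b+1) * (Real.exp (-(p.1)^2) : ℂ)) *
        Complex.exp (((b:ℂ) - a) * p.2 * Complex.I) := by
    rintro ⟨r, θ⟩ ⟨hr, hθ⟩
    have hr' : (0:ℝ) < r := hr
    have hw : Complex.polarCoord.symm (r, θ) = (r:ℂ) * Complex.exp (θ * Complex.I) := by
      rw [Complex.polarCoord_symm_apply, Complex.exp_mul_I]
      push_cast
      ring
    have habs : ‖Complex.polarCoord.symm (r, θ)‖ = r := by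
      rw [Complex.norm_polarCoord_symm, abs_of_pos hr']
    have hconj : (starRingEnd ℂ) (Complex.polarCoord.symm (r, θ))
        = (r:ℂ) * Complex.exp (-(θ * Complex.I)) := by
      rw [hw, map_mul, Complex.conj_ofReal, ← Complex.exp_conj, map_mul, Complex.conj_ofReal,
        Complex.conj_I, mul_neg]
    rw [habs, hconj, hw, Complex.real_smul]
    rw [mul_pow, mul_pow, ← Complex.exp_nat_mul, ← Complex.exp_nat_mul,
      show ((b:ℂ) - a) * θ * Complex.I = (b:ℂ) * (θ * Complex.I) - a * (θ * Complex.I) by ring,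
      Complex.exp_sub, mul_neg, Complex.exp_neg]
    have hne : Complex.exp ((a:ℂ) * (θ * Complex.I)) ≠ 0 := Complex.exp_ne_zero _
    field_simp
    ring
  rw [setIntegral_congr_fun (measurableSet_Ioi.prod measurableSet_Ioo) hcongr,
    Measure.volume_eq_prod,
    setIntegral_prod_mul (f := fun r : ℝ => (r:ℂ) ^ (a+b+1) * (Real.exp (-r^2) : ℂ))
      (g := fun θ : ℝ => Complex.exp (((b:ℂ) - a) * θ * Complex.I))]
  have hJ : (∫ θ in Ioo (-Real.pi) Real.pi, Complex.exp (((b:ℂ) - a) * θ * Complex.I))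
      = if a = b then ((2 * Real.pi : ℝ) : ℂ) else 0 := by
    by_cases hab : a = b
    · subst hab
      simp only [sub_self, zero_mul, Complex.exp_zero, if_true]
      rw [setIntegral_const, Complex.real_smul, mul_one,
        Real.volume_real_Ioo_of_le (by linarith [Real.pi_pos])]
      push_cast
      ring_nf
    · rw [if_neg hab]
      have hc : ((b:ℂ) - a) * Complex.I ≠ 0 := by
        apply mul_ne_zero _ Complex.I_ne_zero
        rw [sub_ne_zero]
        exact_mod_cast fun h => hab (by exact_mod_cast h.symm)
      have : ∀ θ : ℝ, Complex.exp (((b:ℂ) - a) * θ * Complex.I)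
          = Complex.exp ((((b:ℂ) - a) * Complex.I) * θ) := by
        intro θ; ring_nf
      simp_rw [this]
      rw [← integral_Ioc_eq_integral_Ioo,
        ← intervalIntegral.integral_of_le (by linarith [Real.pi_pos])]
      rw [integral_exp_mul_complex hc]
      set d : ℤ := (b:ℤ) - (a:ℤ) with hd
      have hcd : ((b:ℂ) - a) = (d:ℂ) := by push_cast [hd]; ring
      rw [hcd]
      have h1 : (d:ℂ) * Complex.I * (Real.pi : ℂ) = d * (Real.pi * Complex.I) := by ring
      have h2 : (d:ℂ) * Complex.I * ((-Real.pi : ℝ) : ℂ) = ((-d : ℤ) : ℂ) * (Real.pi * Complex.I) := by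
        push_cast; ring
      rw [h1, h2, Complex.exp_int_mul, Complex.exp_int_mul, Complex.exp_pi_mul_I]
      rw [zpow_neg, ← inv_zpow, inv_neg, inv_one, sub_self, zero_div]
  rw [hJ]
  by_cases hab : a = b
  · subst hab
    rw [if_pos rfl, if_pos rfl]
    have hR : (∫ r in Ioi (0:ℝ), (r:ℂ) ^ (a+a+1) * (Real.exp (-r^2) : ℂ))
        = ((a.factorial : ℂ) / 2) := by
      have : ∀ r : ℝ, (r:ℂ) ^ (a+a+1) * (Real.exp (-r^2) : ℂ)
          = ((r ^ (a+a+1) * Real.exp (-r^2) : ℝ) : ℂ) := by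
        intro r; push_cast; ring
      simp_rw [this]
      have hcast : ∫ r in Ioi (0:ℝ), ((r ^ (a+a+1) * Real.exp (-r^2) : ℝ) : ℂ)
          = ((∫ r in Ioi (0:ℝ), r ^ (a+a+1) * Real.exp (-r^2) : ℝ) : ℂ) := integral_ofReal
      rw [hcast]
      have hreal : (∫ r in Ioi (0:ℝ), r ^ (a+a+1) * Real.exp (-r^2))
          = (a.factorial : ℝ) / 2 := by
        have h2 : ∀ x : ℝ, x ^ ((2:ℝ)) = x ^ (2:ℕ) := fun x => by
          rw [show (2:ℝ) = ((2:ℕ):ℝ) by norm_num, Real.rpow_natCast]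
        have hc : ∀ r ∈ Ioi (0:ℝ), r ^ (a+a+1) * Real.exp (-r^2)
            = r ^ ((a+a+1 : ℕ) : ℝ) * Real.exp (-r ^ (2:ℝ)) := by
          intro r hr
          rw [Real.rpow_natCast, h2]
        rw [setIntegral_congr_fun measurableSet_Ioi hc,
          _root_.integral_rpow_mul_exp_neg_rpow (by norm_num) (by push_cast; linarith)]
        have : (((a+a+1 : ℕ) : ℝ) + 1) / 2 = (a : ℝ) + 1 := by push_cast; ring
        rw [this, Real.Gamma_nat_eq_factorial]
        ring
      rw [hreal]
      push_cast
      ring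
    rw [hR]
    push_cast
    field_simp
  · rw [if_neg hab, if_neg hab, mul_zero]

open Set in

set_option maxHeartbeats 1000000 in
lemma integrable_gauss_half : Integrable (fun w : ℂ => Real.exp (-(1/2) * ‖w‖^2)) := by
  have h := (GaussianFourier.integrable_cexp_neg_mul_sq_norm_add
    (V := ℂ) (b := (1/2 : ℂ)) (by norm_num) 0 0).norm
  refine h.congr (Filter.Eventually.of_forall fun w => ?_)
  simp only [zero_mul, add_zero]
  rw [show -(1/2:ℂ) * ((‖w‖ : ℝ):ℂ)^2 = ((-(1/2) * ‖w‖^2 : ℝ):ℂ) by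
      push_cast; ring,
    Complex.norm_exp_ofReal]

lemma integrable_pow_exp_exp (p : ℕ) (c : ℝ) :
    Integrable (fun w : ℂ =>
      (‖w‖ ^ p * Real.exp (-(‖w‖)^2)) * Real.exp (c * ‖w‖)) := by
  refine Integrable.mono'
    (Integrable.const_mul integrable_gauss_half ((p.factorial : ℝ) * Real.exp ((|c|+1)^2/2)))
    ?_ (Filter.Eventually.of_forall fun w => ?_)
  · apply Continuous.aestronglyMeasurable
    continuity
  · set t := ‖w‖ with ht
    have ht0 : 0 ≤ t := norm_nonneg w
    have hexp : t ^ p ≤ (p.factorial : ℝ) * Real.exp t := by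
      have h1 : t ^ p / (p.factorial : ℝ) ≤ Real.exp t := by
        rw [Real.exp_eq_exp_ℝ, NormedSpace.exp_eq_tsum_div]
        exact Summable.le_tsum (NormedSpace.expSeries_div_summable t) p (fun i _ => by positivity)
      have hp : (0:ℝ) < p.factorial := by exact_mod_cast p.factorial_pos
      calc t ^ p = (t ^ p / p.factorial) * p.factorial := by field_simp
        _ ≤ Real.exp t * p.factorial := by gcongr
        _ = (p.factorial : ℝ) * Real.exp t := by ring
    have hnn : 0 ≤ t ^ p * Real.exp (-t^2) * Real.exp (c * t) := by positivity
    rw [Real.norm_eq_abs, _root_.abs_of_nonneg hnn]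
    calc t ^ p * Real.exp (-t^2) * Real.exp (c*t)
        = t ^ p * Real.exp (c*t - t^2) := by
          rw [mul_assoc, ← Real.exp_add]; ring_nf
      _ ≤ ((p.factorial : ℝ) * Real.exp t) * Real.exp (c*t - t^2) := by
          apply mul_le_mul_of_nonneg_right hexp (Real.exp_pos _).le
      _ = (p.factorial : ℝ) * Real.exp (t + (c*t - t^2)) := by rw [Real.exp_add]; ring
      _ ≤ (p.factorial : ℝ) * Real.exp ((|c|+1)^2/2 + -(1/2) * t^2) := by
          refine mul_le_mul_of_nonneg_left (Real.exp_le_exp.2 ?_) (by positivity)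
          nlinarith [le_abs_self c, abs_nonneg c, sq_nonneg (|c|+1-t)]
      _ = (p.factorial : ℝ) * Real.exp ((|c|+1)^2/2) * Real.exp (-(1/2) * t^2) := by
          rw [Real.exp_add]; ring

theorem stmt0 (k l m : ℕ) (hlk : k ≤ l) (z : ℂ) :
    (1 / ((Real.pi : ℂ) * (Nat.factorial m : ℂ))) *
      ∫ w : ℂ, ((starRingEnd ℂ) w) ^ k * w ^ l * fockKernel m z w *
        ((‖w‖ : ℂ)) ^ (2 * m) * (Real.exp (-(‖w‖) ^ 2) : ℂ)
    = ((Nat.factorial (l + m) : ℂ) / (Nat.factorial (l - k + m) : ℂ)) * z ^ (l - k) := by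
  classical
  set c : ℕ → ℂ := fun n => ((Nat.factorial m : ℂ) / (Nat.factorial (n + m) : ℂ)) with hc
  set E : ℂ → ℂ := fun w => ((starRingEnd ℂ) w) ^ k * w ^ l * ((‖w‖ : ℂ)) ^ (2*m) *
      (Real.exp (-(‖w‖) ^ 2) : ℂ) with hE
  have hcnorm : ∀ n : ℕ, ‖c n‖ = (Nat.factorial m : ℝ) / (Nat.factorial (n + m) : ℝ) := by
    intro n
    rw [hc]
    simp only [norm_div, Complex.norm_natCast]
  have hfact : ∀ n : ℕ, (Nat.factorial m : ℝ) / (Nat.factorial (n + m) : ℝ)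
      ≤ 1 / (Nat.factorial n : ℝ) := by
    intro n
    rw [div_le_div_iff₀ (by exact_mod_cast (n+m).factorial_pos)
      (by exact_mod_cast n.factorial_pos)]
    have := Nat.le_of_dvd (n+m).factorial_pos (Nat.factorial_mul_factorial_dvd_factorial_add n m)
    calc (Nat.factorial m : ℝ) * n.factorial = (n.factorial * m.factorial : ℕ) := by
          push_cast; ring
      _ ≤ ((n+m).factorial : ℕ) := by exact_mod_cast this
      _ = 1 * ((n+m).factorial : ℝ) := by push_cast; ring
  have hsummable : ∀ w : ℂ, Summable (fun n : ℕ => c n * (z * (starRingEnd ℂ) w) ^ n) := by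
    intro w
    apply Summable.of_norm
    refine Summable.of_nonneg_of_le (fun n => norm_nonneg _) (fun n => ?_)
      (Real.summable_pow_div_factorial ‖z * (starRingEnd ℂ) w‖)
    rw [norm_mul, norm_pow, hcnorm]
    calc (Nat.factorial m : ℝ) / (Nat.factorial (n + m) : ℝ) * ‖z * (starRingEnd ℂ) w‖ ^ n
        ≤ 1 / (Nat.factorial n : ℝ) * ‖z * (starRingEnd ℂ) w‖ ^ n :=
          mul_le_mul_of_nonneg_right (hfact n) (by positivity)
      _ = ‖z * (starRingEnd ℂ) w‖ ^ n / n.factorial := by ring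
  have hK : ∀ w : ℂ, HasSum (fun n => c n * (z * (starRingEnd ℂ) w) ^ n) (fockKernel m z w) := by
    intro w
    have := (hsummable w).hasSum
    simpa [fockKernel, hc] using this
  have hstep : (∫ w : ℂ, ((starRingEnd ℂ) w) ^ k * w ^ l * fockKernel m z w *
        ((‖w‖ : ℂ)) ^ (2 * m) * (Real.exp (-(‖w‖) ^ 2) : ℂ))
      = ∫ w : ℂ, fockKernel m z w * E w := by
    refine integral_congr_ae (Filter.Eventually.of_forall fun w => ?_)
    simp only [hE]
    ring
  rw [hstep]
  have hHasSum : HasSum (fun n => ∫ w : ℂ, (c n * (z * (starRingEnd ℂ) w) ^ n) * E w)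
      (∫ w : ℂ, fockKernel m z w * E w) := by
    apply hasSum_integral_of_dominated_convergence
      (bound := fun n w => (‖w‖ ^ (k + l + 2*m) * Real.exp (-(‖w‖)^2)) *
        ((‖z‖ * ‖w‖) ^ n / n.factorial))
    · intro n
      apply Continuous.aestronglyMeasurable
      simp only [hE, hc]
      have hcj : Continuous fun w : ℂ => (starRingEnd ℂ) w := Complex.continuous_conj
      exact (continuous_const.mul ((continuous_const.mul hcj).pow n)).mul
        ((((hcj.pow k).mul (continuous_pow l)).mul
          ((Complex.continuous_ofReal.comp continuous_norm).pow (2*m))).mul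
          (Complex.continuous_ofReal.comp
            (Real.continuous_exp.comp (continuous_norm.pow 2).neg)))
    · intro n
      refine Filter.Eventually.of_forall fun w => ?_
      have hEnorm : ‖E w‖ = ‖w‖ ^ k * ‖w‖ ^ l * ‖w‖ ^ (2*m) *
          Real.exp (-(‖w‖)^2) := by
        simp [hE, norm_mul, norm_pow, Complex.norm_conj,
          Complex.norm_real, norm_norm, Real.abs_exp, -Complex.ofReal_exp]
      rw [norm_mul, norm_mul, norm_pow, hcnorm, hEnorm, norm_mul,
        Complex.norm_conj]
      calc (Nat.factorial m : ℝ) / (Nat.factorial (n + m) : ℝ) *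
            (‖z‖ * ‖w‖) ^ n *
            (‖w‖ ^ k * ‖w‖ ^ l * ‖w‖ ^ (2*m) *
              Real.exp (-(‖w‖)^2))
          ≤ 1 / (Nat.factorial n : ℝ) * ((‖z‖ * ‖w‖) ^ n *
              (‖w‖ ^ k * ‖w‖ ^ l * ‖w‖ ^ (2*m) *
                Real.exp (-(‖w‖)^2))) := by
            rw [mul_assoc]
            exact mul_le_mul_of_nonneg_right (hfact n) (by positivity)
        _ = (‖w‖ ^ (k + l + 2*m) * Real.exp (-(‖w‖)^2)) *
              ((‖z‖ * ‖w‖) ^ n / n.factorial) := by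
            rw [pow_add, pow_add]
            ring
    · refine Filter.Eventually.of_forall fun w => ?_
      exact ((Real.summable_pow_div_factorial _).mul_left _)
    · have hfun : (fun w : ℂ => ∑' n : ℕ,
          (‖w‖ ^ (k + l + 2*m) * Real.exp (-(‖w‖)^2)) *
            ((‖z‖ * ‖w‖) ^ n / n.factorial))
          = fun w : ℂ => (‖w‖ ^ (k + l + 2*m) * Real.exp (-(‖w‖)^2)) *
            Real.exp (‖z‖ * ‖w‖) := by
        funext w
        rw [tsum_mul_left]
        congr 1
        rw [Real.exp_eq_exp_ℝ, NormedSpace.exp_eq_tsum_div]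
      rw [hfun]
      exact integrable_pow_exp_exp (k + l + 2*m) (‖z‖)
    · exact Filter.Eventually.of_forall fun w => (hK w).mul_right (E w)
  rw [← hHasSum.tsum_eq]
  have hterm : ∀ n : ℕ, (∫ w : ℂ, (c n * (z * (starRingEnd ℂ) w) ^ n) * E w)
      = if n = l - k then c (l-k) * z ^ (l-k) * ((Real.pi : ℂ) * ((l+m).factorial : ℂ))
        else 0 := by
    intro n
    have hre : ∀ w : ℂ, (c n * (z * (starRingEnd ℂ) w) ^ n) * E w
        = (c n * z ^ n) * (((starRingEnd ℂ) w) ^ (k + n + m) * w ^ (l + m) *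
            (Real.exp (-(‖w‖) ^ 2) : ℂ)) := by
      intro w
      have hA : ((‖w‖ : ℂ)) ^ (2*m) = w ^ m * ((starRingEnd ℂ) w) ^ m := by
        rw [pow_mul, ← Complex.ofReal_pow, Complex.sq_norm, ← Complex.mul_conj, mul_pow]
      simp only [hE, hA, mul_pow, pow_add]
      ring
    simp_rw [hre]
    rw [integral_const_mul, key_integral]
    by_cases hn : n = l - k
    · subst hn
      rw [if_pos (by omega), if_pos rfl, show k + (l - k) + m = l + m by omega]
    · rw [if_neg (by omega), if_neg hn, mul_zero]
  rw [tsum_congr hterm, tsum_ite_eq]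
  have hπ : (Real.pi : ℂ) ≠ 0 := by exact_mod_cast Real.pi_ne_zero
  have h1 : ((Nat.factorial m : ℂ)) ≠ 0 := by exact_mod_cast m.factorial_ne_zero
  have h2 : ((Nat.factorial (l - k + m) : ℂ)) ≠ 0 := by
    exact_mod_cast (l-k+m).factorial_ne_zero
  rw [hc]
  field_simp
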